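/- Smallest eigenvalues criterion: Let A be an N_r × N_r Hermitian positive semidefinite matrix with eigenvalues λ_1 ≥ … ≥ λ_{N_r} ≥ 0 and corresponding orthonormal eigenvectors v_1, …, v_{N_r}. For V = [v_{N_r−N_t+1}, …, v_{N_r}] (the eigenvectors of the N_t smallest eigenvalues), det(I_{N_t} + P·V† A V) = Π_{n=N_r−N_t+1}^{N_r} (1 + P·λ_n), and this is the minimum of det(I_{N_t} + P·W† A W) over all N_r × N_t matrices W with W†W = I_{N_t}. -/

import Mathlib

open Matrix Finset
open scoped ComplexOrder

noncomputable section
namespace S18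
variable {n k : ℕ}


variable {n k : ℕ}

lemma gram_expand (G : Matrix (Fin n) (Fin k) ℂ) :
    (Gᴴ * G).det =
      ∑ r : Fin k → Fin n,
        (∏ a, (starRingEnd ℂ) (G (r a) a)) * (G.submatrix r id).det := by
  have hM : Gᴴ * G = Matrix.of fun a => ∑ l : Fin n, (starRingEnd ℂ) (G l a) • G l := by
    ext a j
    simp [Matrix.mul_apply, Matrix.conjTranspose_apply, Finset.sum_apply]
  rw [hM]
  show (Matrix.detRowAlternating : ((Fin k → ℂ) [⋀^Fin k]→ₗ[ℂ] ℂ)).toMultilinearMap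
      (fun a => ∑ l : Fin n, (starRingEnd ℂ) (G l a) • G l) = _
  rw [MultilinearMap.map_sum]
  refine Finset.sum_congr rfl fun r _ => ?_
  rw [show (fun i => (starRingEnd ℂ) (G (r i) i) • G (r i))
        = fun i => (starRingEnd ℂ) (G (r i) i) • (G.submatrix r id) i from rfl]
  refine (MultilinearMap.map_smul_univ _ (fun i => (starRingEnd ℂ) (G (r i) i)) (G.submatrix r id)).trans ?_
  rfl


variable {n k : ℕ}

lemma hcard' (r : Fin k → Fin n) (h : Function.Injective r) :
    (Finset.univ.image r).card = k := by
  rw [Finset.card_image_of_injective _ h, Finset.card_univ, Fintype.card_fin]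

def monoPart (r : Fin k → Fin n) (h : Function.Injective r) : Fin k → Fin n :=
  ⇑((Finset.univ.image r).orderEmbOfFin (hcard' r h))

lemma monoPart_strictMono (r : Fin k → Fin n) (h : Function.Injective r) :
    StrictMono (monoPart r h) :=
  ((Finset.univ.image r).orderEmbOfFin (hcard' r h)).strictMono

def permPart (r : Fin k → Fin n) (h : Function.Injective r) : Equiv.Perm (Fin k) :=
  Equiv.ofBijective
    (fun a => ((Finset.univ.image r).orderIsoOfFin (hcard' r h)).symm
      ⟨r a, Finset.mem_image_of_mem r (Finset.mem_univ a)⟩)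
    (Finite.injective_iff_bijective.mp (fun a b hab => by
      have := congrArg ((Finset.univ.image r).orderIsoOfFin (hcard' r h)) hab
      simp only [OrderIso.apply_symm_apply, Subtype.mk.injEq] at this
      exact h this))

lemma monoPart_comp_permPart (r : Fin k → Fin n) (h : Function.Injective r) :
    monoPart r h ∘ permPart r h = r := by
  funext a
  simp only [monoPart, permPart, Function.comp_apply, Equiv.ofBijective_apply]
  rw [← Finset.coe_orderIsoOfFin_apply, OrderIso.apply_symm_apply]

lemma monoPart_comp' (f : Fin k → Fin n) (σ : Equiv.Perm (Fin k)) (hf : StrictMono f)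
    (h : Function.Injective (f ∘ σ)) : monoPart (f ∘ σ) h = f := by
  refine (Finset.orderEmbOfFin_unique _ (fun x => ?_) hf).symm
  exact Finset.mem_image.mpr ⟨σ.symm x, Finset.mem_univ _, by simp⟩

lemma permPart_comp' (f : Fin k → Fin n) (σ : Equiv.Perm (Fin k)) (hf : StrictMono f)
    (h : Function.Injective (f ∘ σ)) : permPart (f ∘ σ) h = σ := by
  refine Equiv.ext fun a => ?_
  simp only [permPart, Equiv.ofBijective_apply]
  rw [OrderIso.symm_apply_eq]
  refine Subtype.ext ?_
  rw [Finset.coe_orderIsoOfFin_apply]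
  have : ⇑((Finset.univ.image (f ∘ σ)).orderEmbOfFin (hcard' _ h)) = monoPart (f ∘ σ) h := rfl
  rw [this, monoPart_comp' f σ hf h]
  rfl

open scoped Classical in
lemma step2 (F : (Fin k → Fin n) → ℂ) :
    ∑ r ∈ Finset.univ.filter (fun r : Fin k → Fin n => Function.Injective r), F r
      = ∑ p ∈ (Finset.univ.filter (fun f : Fin k → Fin n => StrictMono f)) ×ˢ
          (Finset.univ : Finset (Equiv.Perm (Fin k))), F (p.1 ∘ p.2) := by
  refine Finset.sum_bij'
    (fun r hr => (monoPart r ((Finset.mem_filter.mp hr).2),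
                  permPart r ((Finset.mem_filter.mp hr).2)))
    (fun p _ => p.1 ∘ p.2) ?_ ?_ ?_ ?_ ?_
  · intro r hr
    exact Finset.mem_product.mpr ⟨Finset.mem_filter.mpr ⟨Finset.mem_univ _,
      monoPart_strictMono r ((Finset.mem_filter.mp hr).2)⟩, Finset.mem_univ _⟩
  · intro p hp
    have h1 : StrictMono p.1 := (Finset.mem_filter.mp (Finset.mem_product.mp hp).1).2
    exact Finset.mem_filter.mpr ⟨Finset.mem_univ _, h1.injective.comp p.2.injective⟩
  · intro r hr
    exact monoPart_comp_permPart r ((Finset.mem_filter.mp hr).2)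
  · intro p hp
    have h1 : StrictMono p.1 := (Finset.mem_filter.mp (Finset.mem_product.mp hp).1).2
    have h2 : Function.Injective (p.1 ∘ p.2) := h1.injective.comp p.2.injective
    exact Prod.ext (monoPart_comp' _ _ h1 h2) (permPart_comp' _ _ h1 h2)
  · intro r hr
    rw [monoPart_comp_permPart r ((Finset.mem_filter.mp hr).2)]


variable {n k : ℕ}

lemma perm_sum (N : Matrix (Fin k) (Fin k) ℂ) :
    ∑ σ : Equiv.Perm (Fin k),
      (∏ a, (starRingEnd ℂ) (N (σ a) a)) * (N.submatrix (⇑σ) id).det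
      = (Complex.normSq N.det : ℂ) := by
  have hdet : ∀ σ : Equiv.Perm (Fin k),
      (N.submatrix (⇑σ) id).det = (Equiv.Perm.sign σ : ℂ) * N.det := fun σ =>
    Matrix.det_permute σ N
  calc ∑ σ : Equiv.Perm (Fin k),
      (∏ a, (starRingEnd ℂ) (N (σ a) a)) * (N.submatrix (⇑σ) id).det
      = (∑ σ : Equiv.Perm (Fin k),
          ((Equiv.Perm.sign σ : ℤ) : ℂ) * ∏ a, (starRingEnd ℂ) (N (σ a) a)) * N.det := by
        rw [Finset.sum_mul]
        refine Finset.sum_congr rfl fun σ _ => ?_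
        rw [hdet σ]; ring
    _ = (starRingEnd ℂ) N.det * N.det := by
        congr 1
        rw [Matrix.det_apply']
        rw [map_sum]
        refine Finset.sum_congr rfl fun σ _ => ?_
        rw [_root_.map_mul, map_prod]
        congr 1
        simp
    _ = (Complex.normSq N.det : ℂ) := by
        rw [mul_comm, Complex.mul_conj]


open scoped Classical in
lemma cauchy_binet (G : Matrix (Fin n) (Fin k) ℂ) :
    (Gᴴ * G).det =
      ((∑ f ∈ Finset.univ.filter (fun f : Fin k → Fin n => StrictMono f),
        Complex.normSq (G.submatrix f id).det : ℝ) : ℂ) := by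
  classical
  rw [gram_expand]
  have h1 : ∑ r : Fin k → Fin n,
        (∏ a, (starRingEnd ℂ) (G (r a) a)) * (G.submatrix r id).det
      = ∑ r ∈ Finset.univ.filter (fun r : Fin k → Fin n => Function.Injective r),
        (∏ a, (starRingEnd ℂ) (G (r a) a)) * (G.submatrix r id).det := by
    refine (Finset.sum_filter_of_ne fun r _ hne => ?_).symm
    by_contra hinj
    simp only [Function.Injective, not_forall] at hinj
    obtain ⟨a, b, hab, hne'⟩ := hinj
    have : (G.submatrix r id).det = 0 :=
      Matrix.det_zero_of_row_eq hne' (funext fun j => by simp [hab])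
    exact hne (by rw [this, mul_zero])
  rw [h1, step2, Finset.sum_product]
  rw [Complex.ofReal_sum]
  refine Finset.sum_congr rfl fun f hf => ?_
  have : ∀ σ : Equiv.Perm (Fin k),
      (∏ a, (starRingEnd ℂ) (G ((f ∘ σ) a) a)) * (G.submatrix (f ∘ ⇑σ) id).det
        = (∏ a, (starRingEnd ℂ) ((G.submatrix f id) (σ a) a))
            * ((G.submatrix f id).submatrix (⇑σ) id).det := by
    intro σ
    rw [Matrix.submatrix_submatrix]
    rfl
  calc ∑ σ : Equiv.Perm (Fin k),
        (∏ a, (starRingEnd ℂ) (G ((f ∘ σ) a) a)) * (G.submatrix (f ∘ ⇑σ) id).det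
      = ∑ σ : Equiv.Perm (Fin k),
        (∏ a, (starRingEnd ℂ) ((G.submatrix f id) (σ a) a))
            * ((G.submatrix f id).submatrix (⇑σ) id).det :=
        Finset.sum_congr rfl fun σ _ => this σ
    _ = (Complex.normSq (G.submatrix f id).det : ℂ) := perm_sum _


lemma strictMono_bound (hkn : k ≤ n) (f : Fin k → Fin n) (hf : StrictMono f) (a : Fin k) :
    (f a : ℕ) ≤ n - k + a := by
  have key : ∀ m : ℕ, ∀ h : (a : ℕ) + m < k, (f a : ℕ) + m ≤ f ⟨a + m, h⟩ := by
    intro m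
    induction m with
    | zero => intro h; simp
    | succ m ih =>
      intro h
      have h' : (a : ℕ) + m < k := by omega
      have h1 := ih h'
      have h2 : f ⟨(a : ℕ) + m, h'⟩ < f ⟨(a : ℕ) + (m + 1), h⟩ := by
        apply hf
        simp [Fin.lt_def]
      have h3 : (f ⟨(a : ℕ) + m, h'⟩ : ℕ) < (f ⟨(a : ℕ) + (m + 1), h⟩ : ℕ) := h2
      omega
  have hk : 0 < k := a.pos
  have h4 := key (k - 1 - a) (by omega)
  have h5 : (f ⟨(a : ℕ) + (k - 1 - (a : ℕ)), by omega⟩ : ℕ) < n := (f _).isLt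
  omega


lemma diag_one_add {m : ℕ} (P : ℝ) (g : Fin m → ℝ) :
    (1 : Matrix (Fin m) (Fin m) ℂ) + (P : ℂ) • Matrix.diagonal (fun j => (g j : ℂ))
      = Matrix.diagonal (fun j => ((1 + P * g j : ℝ) : ℂ)) := by
  ext i j
  by_cases h : i = j
  · subst h
    simp only [Matrix.add_apply, Matrix.smul_apply, Matrix.one_apply_eq,
      Matrix.diagonal_apply_eq, smul_eq_mul]
    push_cast
    ring
  · simp [Matrix.one_apply_ne h, Matrix.diagonal_apply_ne _ h]

end S18
end

open S18

theorem stmt_18 (Nt Nr : ℕ) (hNt : Nt ≤ Nr)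
    (A : Matrix (Fin Nr) (Fin Nr) ℂ) (hA : A.PosSemidef)
    (P : ℝ) (hP : 0 < P)
    (lam : Fin Nr → ℝ) (hsorted : ∀ i j : Fin Nr, i ≤ j → lam j ≤ lam i)
    (U : Matrix (Fin Nr) (Fin Nr) ℂ) (hU : Uᴴ * U = 1)
    (hdecomp : A = U * Matrix.diagonal (fun i => (lam i : ℂ)) * Uᴴ)
    (V : Matrix (Fin Nr) (Fin Nt) ℂ)
    (hV : V = fun i (j : Fin Nt) => U i ⟨Nr - Nt + (j : ℕ), by omega⟩) :
    (1 + (P : ℂ) • (Vᴴ * A * V)).det =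
      ∏ j : Fin Nt, ((1 + P * lam ⟨Nr - Nt + (j : ℕ), by omega⟩ : ℝ) : ℂ) ∧
    ∀ W : Matrix (Fin Nr) (Fin Nt) ℂ, Wᴴ * W = 1 →
      (1 + (P : ℂ) • (Vᴴ * A * V)).det.re ≤
        (1 + (P : ℂ) • (Wᴴ * A * W)).det.re := by
  classical
  set emb : Fin Nt → Fin Nr := fun j => ⟨Nr - Nt + (j : ℕ), by omega⟩ with hemb
  have hUU : U * Uᴴ = 1 := mul_eq_one_comm.mp hU
  have hD : Uᴴ * A * U = Matrix.diagonal (fun i => (lam i : ℂ)) := by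
    rw [hdecomp]
    simp only [← Matrix.mul_assoc]
    rw [hU, Matrix.one_mul, Matrix.mul_assoc, hU, Matrix.mul_one]
  -- part 1
  have hVsub : V = U.submatrix id emb := by rw [hV]; rfl
  have hembinj : Function.Injective emb := by
    intro a b hab
    have : (emb a : ℕ) = (emb b : ℕ) := congrArg _ hab
    simp only [hemb] at this
    exact Fin.ext (by omega)
  have hVAV : Vᴴ * A * V = Matrix.diagonal (fun j => (lam (emb j) : ℂ)) := by
    have e0 : (Uᴴ * A * U).submatrix emb emb
        = Uᴴ.submatrix emb id * A * U.submatrix id emb := by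
      rw [Matrix.submatrix_mul (Uᴴ * A) U emb id emb Function.bijective_id,
        Matrix.submatrix_mul Uᴴ A emb id id Function.bijective_id, Matrix.submatrix_id_id]
    rw [hVsub, Matrix.conjTranspose_submatrix, ← e0, hD,
      Matrix.submatrix_diagonal _ emb hembinj]
    rfl
  have hdiag1 : ∀ (g : Fin Nt → ℝ),
      (1 : Matrix (Fin Nt) (Fin Nt) ℂ) + (P : ℂ) • Matrix.diagonal (fun j => (g j : ℂ))
        = Matrix.diagonal (fun j => ((1 + P * g j : ℝ) : ℂ)) := by
    intro g
    ext i j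
    by_cases h : i = j
    · subst h
      simp only [Matrix.add_apply, Matrix.smul_apply, Matrix.one_apply_eq,
        Matrix.diagonal_apply_eq, smul_eq_mul]
      push_cast
      ring
    · simp [Matrix.one_apply_ne h, Matrix.diagonal_apply_ne _ h]
  have part1 : (1 + (P : ℂ) • (Vᴴ * A * V)).det =
      ∏ j : Fin Nt, ((1 + P * lam (emb j) : ℝ) : ℂ) := by
    rw [hVAV, hdiag1, Matrix.det_diagonal]
  refine ⟨part1, ?_⟩
  -- part 2
  intro W hW
  have hlam0 : ∀ i, 0 ≤ lam i := by
    have hpsd : (Matrix.diagonal fun i => (lam i : ℂ)).PosSemidef := by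
      rw [← hD]; exact hA.conjTranspose_mul_mul_same U
    intro i
    exact Complex.zero_le_real.mp (Matrix.posSemidef_diagonal_iff.mp hpsd i)
  set d : Fin Nr → ℝ := fun i => 1 + P * lam i with hdd
  have hd0 : ∀ i, 0 ≤ d i := fun i => by
    have h1 := hlam0 i; have h2 := hP.le; simp only [hdd]; positivity
  have hdanti : ∀ i j : Fin Nr, i ≤ j → d j ≤ d i := fun i j hij => by
    have := hsorted i j hij; simp only [hdd]; nlinarith
  have main : ∀ X : Matrix (Fin Nr) (Fin Nt) ℂ, Xᴴ * X = 1 →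
      (1 + (P : ℂ) • (Xᴴ * A * X)).det =
        ((∑ f ∈ Finset.univ.filter (fun f : Fin Nt → Fin Nr => StrictMono f),
          (∏ a, d (f a)) * Complex.normSq (((Uᴴ * X).submatrix f id)).det : ℝ) : ℂ) := by
    intro X hX
    set X' : Matrix (Fin Nr) (Fin Nt) ℂ := Uᴴ * X with hX'def
    have hX' : X'ᴴ * X' = 1 := by
      rw [hX'def, Matrix.conjTranspose_mul, Matrix.conjTranspose_conjTranspose,
        Matrix.mul_assoc, ← Matrix.mul_assoc U, hUU, Matrix.one_mul, hX]
    set G : Matrix (Fin Nr) (Fin Nt) ℂ :=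
      (Matrix.diagonal fun i => (Real.sqrt (d i) : ℂ)) * X' with hG
    have hGG : Gᴴ * G = 1 + (P : ℂ) • (Xᴴ * A * X) := by
      have hstar : star (fun i => (Real.sqrt (d i) : ℂ)) = fun i => (Real.sqrt (d i) : ℂ) :=
        funext fun i => Complex.conj_ofReal _
      have hmid : X'ᴴ * Matrix.diagonal (fun i => (lam i : ℂ)) * X' = Xᴴ * A * X := by
        rw [hX'def, hdecomp, Matrix.conjTranspose_mul, Matrix.conjTranspose_conjTranspose]
        simp only [Matrix.mul_assoc]
      calc Gᴴ * G = X'ᴴ * ((Matrix.diagonal fun i => (Real.sqrt (d i) : ℂ))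
            * ((Matrix.diagonal fun i => (Real.sqrt (d i) : ℂ)) * X')) := by
            rw [hG, Matrix.conjTranspose_mul, Matrix.diagonal_conjTranspose, hstar,
              Matrix.mul_assoc]
        _ = X'ᴴ * (Matrix.diagonal fun i => (d i : ℂ)) * X' := by
            rw [← Matrix.mul_assoc (Matrix.diagonal _), Matrix.diagonal_mul_diagonal,
              Matrix.mul_assoc]
            have heq : (fun i => (Real.sqrt (d i) : ℂ) * (Real.sqrt (d i) : ℂ))
                = fun i => (d i : ℂ) :=
              funext fun i => by rw [← Complex.ofReal_mul, Real.mul_self_sqrt (hd0 i)]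
            rw [heq]
        _ = X'ᴴ * ((1 : Matrix (Fin Nr) (Fin Nr) ℂ)
              + (P : ℂ) • Matrix.diagonal (fun i => (lam i : ℂ))) * X' := by
            rw [diag_one_add]
        _ = 1 + (P : ℂ) • (Xᴴ * A * X) := by
            rw [Matrix.mul_add, Matrix.add_mul, Matrix.mul_one, hX',
              Matrix.mul_smul, Matrix.smul_mul, hmid]
    rw [← hGG, cauchy_binet G]
    congr 1
    refine Finset.sum_congr rfl fun f hf => ?_
    have hsub : G.submatrix f id
        = Matrix.of (fun a j => (Real.sqrt (d (f a)) : ℂ) * (X'.submatrix f id) a j) := by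
      ext a j
      simp [hG, Matrix.diagonal_mul]
    rw [hsub, Matrix.det_mul_column, Complex.normSq_mul]
    have : (∏ a, (Real.sqrt (d (f a)) : ℂ)) = ((∏ a, Real.sqrt (d (f a)) : ℝ) : ℂ) := by
      rw [Complex.ofReal_prod]
    rw [this, Complex.normSq_ofReal, ← Finset.prod_mul_distrib]
    congr 1
    exact Finset.prod_congr rfl fun a _ => Real.mul_self_sqrt (hd0 (f a))
  -- normalization
  set W' : Matrix (Fin Nr) (Fin Nt) ℂ := Uᴴ * W with hW'def
  have hW' : W'ᴴ * W' = 1 := by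
    rw [hW'def, Matrix.conjTranspose_mul, Matrix.conjTranspose_conjTranspose,
      Matrix.mul_assoc, ← Matrix.mul_assoc U, hUU, Matrix.one_mul, hW]
  have hnorm : (∑ f ∈ Finset.univ.filter (fun f : Fin Nt → Fin Nr => StrictMono f),
      Complex.normSq ((W'.submatrix f id)).det : ℝ) = 1 := by
    have h := (cauchy_binet W').symm
    rw [hW', Matrix.det_one] at h
    exact_mod_cast h
  -- LHS value
  have hre : (1 + (P : ℂ) • (Vᴴ * A * V)).det.re = ∏ j, d (emb j) := by
    rw [part1, ← Complex.ofReal_prod, Complex.ofReal_re]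
  rw [hre, main W hW, Complex.ofReal_re, ← hW'def]
  calc ∏ j, d (emb j)
      = ∑ f ∈ Finset.univ.filter (fun f : Fin Nt → Fin Nr => StrictMono f),
          (∏ j, d (emb j)) * Complex.normSq ((W'.submatrix f id)).det := by
        rw [← Finset.mul_sum, hnorm, mul_one]
    _ ≤ ∑ f ∈ Finset.univ.filter (fun f : Fin Nt → Fin Nr => StrictMono f),
          (∏ a, d (f a)) * Complex.normSq ((W'.submatrix f id)).det := by
        refine Finset.sum_le_sum fun f hf => ?_
        have hfmono : StrictMono f := (Finset.mem_filter.mp hf).2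
        refine mul_le_mul_of_nonneg_right ?_ (Complex.normSq_nonneg _)
        refine Finset.prod_le_prod (fun a _ => hd0 (emb a)) (fun a _ => ?_)
        refine hdanti (f a) (emb a) ?_
        have := strictMono_bound hNt f hfmono a
        exact this
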